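/- Fix w, t ∈ ℂ with sin(πw) ≠ 0 and sin(πt) ≠ 0. Then the elliptic function σ degenerates to its trigonometric limit as τ → i∞: the function τ ↦ σ_τ(w,t) tends to π·sin(π(w−t))/(sin(πw)·sin(πt)) along the filter of τ ∈ ℂ with Im τ → +∞ (in Lean, Tendsto along Filter.comap Complex.im Filter.atTop). -/

import Mathlib

open Complex

open Filter Topology Real
lemma aux_nonneg (n : ℤ) : (0:ℝ) ≤ (n:ℝ) * ((n:ℝ) + 1) := by
  have : (0:ℤ) ≤ n * (n + 1) := by nlinarith [sq_nonneg (2*n+1)]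
  exact_mod_cast this

lemma aux_two {n : ℤ} (h0 : n ≠ 0) (h1 : n ≠ -1) : (2:ℝ) ≤ (n:ℝ) * ((n:ℝ) + 1) := by
  have : (2:ℤ) ≤ n * (n + 1) := by
    rcases lt_or_ge n (-1) with h | h
    · nlinarith
    · have : 1 ≤ n := by omega
      nlinarith
  exact_mod_cast this

lemma norm_term (b : ℤ → ℂ) (τ : ℂ) (n : ℤ) :
    ‖b n * Complex.exp ((Real.pi:ℂ) * Complex.I * ((n:ℂ) * ((n:ℂ) + 1)) * τ)‖
      = ‖b n‖ * rexp (-(Real.pi * ((n:ℝ) * ((n:ℝ)+1)) * τ.im)) := by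
  rw [norm_mul]
  congr 1
  rw [show (Real.pi:ℂ) * Complex.I * ((n:ℂ) * ((n:ℂ) + 1)) * τ
      = ((Real.pi * ((n:ℝ) * ((n:ℝ)+1)) : ℝ) : ℂ) * (τ * Complex.I) by push_cast; ring]
  rw [Complex.norm_exp, Complex.re_ofReal_mul, Complex.mul_I_re]
  ring_nf

lemma key (b : ℤ → ℂ) (A a : ℝ) (ha : 0 ≤ a)
    (hb : ∀ n : ℤ, ‖b n‖ ≤ A * rexp (a * |(n:ℝ)|)) :
    Filter.Tendsto
      (fun τ : ℂ => ∑' n : ℤ, b n * Complex.exp ((Real.pi:ℂ) * Complex.I * ((n:ℂ) * ((n:ℂ) + 1)) * τ))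
      (Filter.comap Complex.im Filter.atTop) (nhds (b 0 + b (-1))) := by
  have hA : 0 ≤ A := le_trans (norm_nonneg (b 0)) (by simpa using hb 0)
  set S : ℝ := (a + Real.pi) / (2 * Real.pi) with hS
  set g : ℤ → ℝ := fun n => A * rexp (-Real.pi * (1 * (n:ℝ)^2 - 2 * S * |(n:ℝ)|)) with hgdef
  have hg : Summable g := by
    have := (summable_pow_mul_jacobiTheta₂_term_bound S one_pos 0).mul_left A
    simpa [g] using this
  have hgnn : ∀ n, 0 ≤ g n := fun n => by positivity
  have hexp : ∀ n : ℤ, A * rexp (a * |(n:ℝ)| + -(Real.pi * ((n:ℝ) * ((n:ℝ)+1)) * 1)) ≤ g n := by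
    intro n
    apply mul_le_mul_of_nonneg_left _ hA
    apply Real.exp_le_exp.mpr
    have hn : -(n:ℝ) ≤ |(n:ℝ)| := neg_le_abs _
    have hn2 : (n:ℝ)^2 = |(n:ℝ)|^2 := (_root_.sq_abs _).symm
    have h2 : Real.pi * (2 * S) = a + Real.pi := by
      rw [hS]; field_simp
    have h3 : Real.pi * (2 * S) * |(n:ℝ)| = (a + Real.pi) * |(n:ℝ)| := by rw [h2]
    nlinarith [h3, mul_le_mul_of_nonneg_left hn Real.pi_pos.le]
  have hbound : ∀ (τ : ℂ), 1 ≤ τ.im → ∀ n : ℤ,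
      ‖b n * Complex.exp ((Real.pi:ℂ) * Complex.I * ((n:ℂ) * ((n:ℂ) + 1)) * τ)‖ ≤ g n := by
    intro τ hτ n
    rw [norm_term]
    have h1 : ‖b n‖ * rexp (-(Real.pi * ((n:ℝ) * ((n:ℝ)+1)) * τ.im))
        ≤ (A * rexp (a * |(n:ℝ)|)) * rexp (-(Real.pi * ((n:ℝ) * ((n:ℝ)+1)) * 1)) := by
      apply mul_le_mul (hb n) _ (Real.exp_nonneg _) (by positivity)
      apply Real.exp_le_exp.mpr
      have := aux_nonneg n
      nlinarith [mul_nonneg (mul_nonneg Real.pi_pos.le this) (sub_nonneg.mpr hτ)]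
    refine h1.trans ?_
    rw [mul_assoc, ← Real.exp_add]
    exact hexp n
  have hbound2 : ∀ (τ : ℂ), 1 ≤ τ.im → ∀ n : ℤ, n ≠ 0 → n ≠ -1 →
      ‖b n * Complex.exp ((Real.pi:ℂ) * Complex.I * ((n:ℂ) * ((n:ℂ) + 1)) * τ)‖
        ≤ g n * rexp (-(2*Real.pi) * (τ.im - 1)) := by
    intro τ hτ n h0 h1
    rw [norm_term]
    have hc := aux_two h0 h1
    have hstep : rexp (-(Real.pi * ((n:ℝ) * ((n:ℝ)+1)) * τ.im))
        ≤ rexp (-(Real.pi * ((n:ℝ) * ((n:ℝ)+1)) * 1)) * rexp (-(2*Real.pi) * (τ.im - 1)) := by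
      rw [← Real.exp_add]
      apply Real.exp_le_exp.mpr
      nlinarith [mul_nonneg (sub_nonneg.mpr hc) (mul_nonneg Real.pi_pos.le (sub_nonneg.mpr hτ))]
    calc ‖b n‖ * rexp (-(Real.pi * ((n:ℝ) * ((n:ℝ)+1)) * τ.im))
        ≤ (A * rexp (a * |(n:ℝ)|)) *
          (rexp (-(Real.pi * ((n:ℝ) * ((n:ℝ)+1)) * 1)) * rexp (-(2*Real.pi) * (τ.im - 1))) :=
          mul_le_mul (hb n) hstep (Real.exp_nonneg _) (by positivity)
      _ = (A * rexp (a * |(n:ℝ)| + -(Real.pi * ((n:ℝ) * ((n:ℝ)+1)) * 1)))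
            * rexp (-(2*Real.pi) * (τ.im - 1)) := by rw [Real.exp_add]; ring
      _ ≤ g n * rexp (-(2*Real.pi) * (τ.im - 1)) :=
          mul_le_mul_of_nonneg_right (hexp n) (Real.exp_nonneg _)
  set M : ℝ := ∑' n : ℤ, g n with hM
  have hdiff : ∀ τ : ℂ, 1 ≤ τ.im →
      ‖(∑' n : ℤ, b n * Complex.exp ((Real.pi:ℂ) * Complex.I * ((n:ℂ) * ((n:ℂ) + 1)) * τ))
          - (b 0 + b (-1))‖ ≤ M * rexp (-(2*Real.pi) * (τ.im - 1)) := by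
    intro τ hτ
    set f : ℤ → ℂ :=
      fun n => b n * Complex.exp ((Real.pi:ℂ) * Complex.I * ((n:ℂ) * ((n:ℂ) + 1)) * τ) with hf
    have hsf : Summable f := hg.of_norm_bounded (hbound τ hτ)
    have hsf0 : Summable (fun n => if n = 0 then 0 else f n) := by
      apply hg.of_norm_bounded
      intro n
      split_ifs
      · simpa using hgnn n
      · exact hbound τ hτ n
    have e0 : f 0 = b 0 := by simp [hf]
    have e1 : f (-1) = b (-1) := by
      simp only [hf]
      norm_num
    rw [hsf.tsum_eq_add_tsum_ite 0, hsf0.tsum_eq_add_tsum_ite (-1)]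
    have e2 : (if (-1 : ℤ) = 0 then (0:ℂ) else f (-1)) = b (-1) := by rw [if_neg (by decide), e1]
    rw [e0, e2]
    have heq : b 0 + (b (-1) + ∑' n : ℤ, if n = -1 then 0 else if n = 0 then (0:ℂ) else f n)
        - (b 0 + b (-1)) = ∑' n : ℤ, if n = -1 then 0 else if n = 0 then (0:ℂ) else f n := by
      ring
    rw [heq]
    apply tsum_of_norm_bounded (hg.hasSum.mul_right (rexp (-(2*Real.pi) * (τ.im - 1))))
    intro n
    split_ifs with h1 h2
    · simp only [norm_zero]
      exact mul_nonneg (hgnn n) (Real.exp_nonneg _)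
    · simp only [norm_zero]
      exact mul_nonneg (hgnn n) (Real.exp_nonneg _)
    · exact hbound2 τ hτ n h2 h1
  -- squeeze
  rw [← tendsto_sub_nhds_zero_iff]
  have him : Filter.Tendsto Complex.im (Filter.comap Complex.im Filter.atTop) Filter.atTop :=
    tendsto_comap
  apply squeeze_zero_norm' ((him.eventually (eventually_ge_atTop 1)).mono
    (fun τ hτ => hdiff τ hτ))
  have h1 : Filter.Tendsto (fun τ : ℂ => -(2*Real.pi) * (τ.im - 1))
      (Filter.comap Complex.im Filter.atTop) Filter.atBot := by
    apply Filter.Tendsto.const_mul_atTop_of_neg (by nlinarith [Real.pi_pos])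
    exact tendsto_atTop_add_const_right _ (-1) him
  have h2 := (Real.tendsto_exp_atBot.comp h1).const_mul M
  simpa using h2


/-- Jacobi's theta function `θ₁(t|τ)`. -/
noncomputable def theta1 (τ t : ℂ) : ℂ :=
  -∑' j : ℤ, Complex.exp ((Real.pi : ℂ) * Complex.I * ((j : ℂ) + 1/2)^2 * τ +
      2 * (Real.pi : ℂ) * Complex.I * ((j : ℂ) + 1/2) * (t + 1/2))

/-- The derivative `θ₁'(t|τ)` of `θ₁` in `t`. -/
noncomputable def theta1' (τ t : ℂ) : ℂ := deriv (theta1 τ) t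

/-- `ρ(t) = θ₁'(t|τ)/θ₁(t|τ)`. -/
noncomputable def rho (τ t : ℂ) : ℂ := theta1' τ t / theta1 τ t

/-- `σ(w,t) = θ₁(w−t|τ)·θ₁'(0|τ)/(θ₁(w|τ)·θ₁(t|τ))`. -/
noncomputable def sigma (τ w t : ℂ) : ℂ :=
  theta1 τ (w - t) * theta1' τ 0 / (theta1 τ w * theta1 τ t)

lemma theta1_eq (τ x : ℂ) :
    theta1 τ x = -(Complex.exp ((Real.pi:ℂ)*Complex.I*τ/4 + (Real.pi:ℂ)*Complex.I*(x+1/2)) *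
      jacobiTheta₂ (x + 1/2 + τ/2) τ) := by
  rw [theta1, jacobiTheta₂, ← tsum_mul_left, neg_inj]
  apply tsum_congr
  intro j
  rw [jacobiTheta₂_term, ← Complex.exp_add]
  congr 1
  push_cast
  ring

lemma limJ (x : ℂ) :
    Filter.Tendsto (fun τ : ℂ => jacobiTheta₂ (x + 1/2 + τ/2) τ)
      (Filter.comap Complex.im Filter.atTop)
      (nhds (1 - Complex.exp (-(2*(Real.pi:ℂ)*Complex.I*x)))) := by
  have hb : ∀ n : ℤ, ‖Complex.exp (2*(Real.pi:ℂ)*Complex.I*(n:ℂ)*(x+1/2))‖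
      ≤ 1 * rexp ((2*Real.pi*‖x+1/2‖) * |(n:ℝ)|) := by
    intro n
    rw [one_mul, Complex.norm_exp]
    apply Real.exp_le_exp.mpr
    calc (2*(Real.pi:ℂ)*Complex.I*(n:ℂ)*(x+1/2)).re
        ≤ ‖2*(Real.pi:ℂ)*Complex.I*(n:ℂ)*(x+1/2)‖ := Complex.re_le_norm _
      _ = 2*Real.pi*|(n:ℝ)| * ‖x+1/2‖ := by
          simp only [norm_mul, Complex.norm_two, Complex.norm_I, Complex.norm_real,
            Complex.norm_intCast, Real.norm_eq_abs, _root_.abs_of_nonneg Real.pi_pos.le]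
          push_cast
          ring
      _ = (2*Real.pi*‖x+1/2‖) * |(n:ℝ)| := by ring
  have h := key (fun n : ℤ => Complex.exp (2*(Real.pi:ℂ)*Complex.I*(n:ℂ)*(x+1/2)))
    1 (2*Real.pi*‖x+1/2‖) (by positivity) hb
  have hfun : (fun τ : ℂ => ∑' n : ℤ, Complex.exp (2*(Real.pi:ℂ)*Complex.I*(n:ℂ)*(x+1/2)) *
      Complex.exp ((Real.pi:ℂ) * Complex.I * ((n:ℂ) * ((n:ℂ) + 1)) * τ))
      = fun τ : ℂ => jacobiTheta₂ (x + 1/2 + τ/2) τ := by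
    funext τ
    rw [jacobiTheta₂]
    apply tsum_congr
    intro n
    rw [jacobiTheta₂_term, ← Complex.exp_add]
    congr 1
    push_cast
    ring
  rw [hfun] at h
  have e0 : Complex.exp (2*(Real.pi:ℂ)*Complex.I*(((0:ℤ)):ℂ)*(x+1/2)) = 1 := by
    norm_num
  have e1 : Complex.exp (2*(Real.pi:ℂ)*Complex.I*(((-1):ℤ):ℂ)*(x+1/2))
      = -Complex.exp (-(2*(Real.pi:ℂ)*Complex.I*x)) := by
    have heq : (2*(Real.pi:ℂ)*Complex.I*(((-1):ℤ):ℂ)*(x+1/2))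
        = -(2*(Real.pi:ℂ)*Complex.I*x) + -((Real.pi:ℂ)*Complex.I) := by push_cast; ring
    have hmi : Complex.exp (-((Real.pi:ℂ)*Complex.I)) = -1 := by
      rw [Complex.exp_neg, Complex.exp_pi_mul_I]; norm_num
    rw [heq, Complex.exp_add, hmi]
    ring
  have h' : Filter.Tendsto (fun τ : ℂ => jacobiTheta₂ (x + 1/2 + τ/2) τ)
      (Filter.comap Complex.im Filter.atTop)
      (nhds (Complex.exp (2*(Real.pi:ℂ)*Complex.I*(((0:ℤ)):ℂ)*(x+1/2))
        + Complex.exp (2*(Real.pi:ℂ)*Complex.I*(((-1):ℤ):ℂ)*(x+1/2)))) := h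
  rw [e0, e1] at h'
  rw [sub_eq_add_neg]
  exact h'

lemma limD :
    Filter.Tendsto (fun τ : ℂ => jacobiTheta₂' ((0:ℂ) + 1/2 + τ/2) τ)
      (Filter.comap Complex.im Filter.atTop)
      (nhds (2*(Real.pi:ℂ)*Complex.I)) := by
  have hb : ∀ n : ℤ, ‖2*(Real.pi:ℂ)*Complex.I*(n:ℂ) *
      Complex.exp (2*(Real.pi:ℂ)*Complex.I*(n:ℂ)*((1:ℂ)/2))‖
      ≤ (2*Real.pi) * rexp (1 * |(n:ℝ)|) := by
    intro n
    rw [norm_mul]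
    have h1 : ‖2*(Real.pi:ℂ)*Complex.I*(n:ℂ)‖ = 2*Real.pi*|(n:ℝ)| := by
      simp only [norm_mul, Complex.norm_two, Complex.norm_I,
        Complex.norm_real, Complex.norm_intCast, Real.norm_eq_abs, _root_.abs_of_nonneg Real.pi_pos.le]
      push_cast
      ring
    have h2 : ‖Complex.exp (2*(Real.pi:ℂ)*Complex.I*(n:ℂ)*((1:ℂ)/2))‖ = 1 := by
      rw [Complex.norm_exp]
      have : (2*(Real.pi:ℂ)*Complex.I*(n:ℂ)*((1:ℂ)/2)).re = 0 := by
        have : 2*(Real.pi:ℂ)*Complex.I*(n:ℂ)*((1:ℂ)/2)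
            = ((Real.pi * (n:ℝ) : ℝ) : ℂ) * Complex.I := by push_cast; ring
        rw [this]; simp
      rw [this, Real.exp_zero]
    rw [h1, h2, mul_one, one_mul]
    have : |(n:ℝ)| ≤ rexp |(n:ℝ)| := by
      have := Real.add_one_le_exp |(n:ℝ)|
      have := abs_nonneg (n:ℝ)
      linarith
    nlinarith [Real.pi_pos, abs_nonneg (n:ℝ), Real.exp_nonneg |(n:ℝ)|]
  have h := key (fun n : ℤ => 2*(Real.pi:ℂ)*Complex.I*(n:ℂ) *
      Complex.exp (2*(Real.pi:ℂ)*Complex.I*(n:ℂ)*((1:ℂ)/2)))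
    (2*Real.pi) 1 one_pos.le hb
  have hfun : (fun τ : ℂ => ∑' n : ℤ, (2*(Real.pi:ℂ)*Complex.I*(n:ℂ) *
      Complex.exp (2*(Real.pi:ℂ)*Complex.I*(n:ℂ)*((1:ℂ)/2))) *
      Complex.exp ((Real.pi:ℂ) * Complex.I * ((n:ℂ) * ((n:ℂ) + 1)) * τ))
      = fun τ : ℂ => jacobiTheta₂' ((0:ℂ) + 1/2 + τ/2) τ := by
    funext τ
    rw [jacobiTheta₂']
    apply tsum_congr
    intro n
    rw [jacobiTheta₂'_term, jacobiTheta₂_term, mul_assoc, ← Complex.exp_add]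
    congr 2
    push_cast
    ring
  rw [hfun] at h
  have h' : Filter.Tendsto (fun τ : ℂ => jacobiTheta₂' ((0:ℂ) + 1/2 + τ/2) τ)
      (Filter.comap Complex.im Filter.atTop)
      (nhds (2*(Real.pi:ℂ)*Complex.I*(((0:ℤ)):ℂ) *
          Complex.exp (2*(Real.pi:ℂ)*Complex.I*(((0:ℤ)):ℂ)*((1:ℂ)/2))
        + 2*(Real.pi:ℂ)*Complex.I*((((-1):ℤ)):ℂ) *
          Complex.exp (2*(Real.pi:ℂ)*Complex.I*((((-1):ℤ)):ℂ)*((1:ℂ)/2)))) := h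
  have e : 2*(Real.pi:ℂ)*Complex.I*(((0:ℤ)):ℂ) *
          Complex.exp (2*(Real.pi:ℂ)*Complex.I*(((0:ℤ)):ℂ)*((1:ℂ)/2))
        + 2*(Real.pi:ℂ)*Complex.I*((((-1):ℤ)):ℂ) *
          Complex.exp (2*(Real.pi:ℂ)*Complex.I*((((-1):ℤ)):ℂ)*((1:ℂ)/2))
      = 2*(Real.pi:ℂ)*Complex.I := by
    have heq : 2*(Real.pi:ℂ)*Complex.I*((((-1):ℤ)):ℂ)*((1:ℂ)/2) = -((Real.pi:ℂ)*Complex.I) := by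
      push_cast; ring
    have hmi : Complex.exp (-((Real.pi:ℂ)*Complex.I)) = -1 := by
      rw [Complex.exp_neg, Complex.exp_pi_mul_I]; norm_num
    rw [heq, hmi]
    push_cast
    ring
  rw [e] at h'
  exact h'

lemma theta1'_eq {τ : ℂ} (hτ : 0 < τ.im) :
    theta1' τ 0 = -(Complex.exp ((Real.pi:ℂ)*Complex.I*τ/4 + (Real.pi:ℂ)*Complex.I*((0:ℂ)+1/2)) *
      ((Real.pi:ℂ)*Complex.I * jacobiTheta₂ ((0:ℂ) + 1/2 + τ/2) τ
        + jacobiTheta₂' ((0:ℂ) + 1/2 + τ/2) τ)) := by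
  rw [theta1']
  have hfun : theta1 τ = fun x : ℂ =>
      -(Complex.exp ((Real.pi:ℂ)*Complex.I*τ/4 + (Real.pi:ℂ)*Complex.I*(x+1/2)) *
        jacobiTheta₂ (x + 1/2 + τ/2) τ) := funext (theta1_eq τ)
  rw [hfun]
  have h0 : HasDerivAt (fun x : ℂ => (Real.pi:ℂ)*Complex.I*τ/4 + (Real.pi:ℂ)*Complex.I*(x+1/2))
      ((Real.pi:ℂ)*Complex.I) 0 := by
    have := ((((hasDerivAt_id' (0:ℂ)).add_const (1/2)).const_mul ((Real.pi:ℂ)*Complex.I)).const_add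
        ((Real.pi:ℂ)*Complex.I*τ/4))
    rwa [mul_one] at this
  have h1 : HasDerivAt
      (fun x : ℂ => Complex.exp ((Real.pi:ℂ)*Complex.I*τ/4 + (Real.pi:ℂ)*Complex.I*(x+1/2)))
      (Complex.exp ((Real.pi:ℂ)*Complex.I*τ/4 + (Real.pi:ℂ)*Complex.I*((0:ℂ)+1/2)) *
        ((Real.pi:ℂ)*Complex.I)) 0 := h0.cexp
  have hinner : HasDerivAt (fun x : ℂ => x + 1/2 + τ/2) 1 0 :=
    ((hasDerivAt_id (0:ℂ)).add_const (1/2)).add_const (τ/2)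
  have h2 : HasDerivAt (fun x : ℂ => jacobiTheta₂ (x + 1/2 + τ/2) τ)
      (jacobiTheta₂' ((0:ℂ) + 1/2 + τ/2) τ) 0 := by
    have hj := hasDerivAt_jacobiTheta₂_fst ((0:ℂ) + 1/2 + τ/2) hτ
    have := HasDerivAt.comp (0:ℂ) hj hinner
    rw [mul_one] at this
    exact this
  have hprod := ((h1.mul h2).neg).deriv
  exact hprod.trans (by ring)


lemma Lform (x : ℂ) : (1:ℂ) - Complex.exp (-(2*(Real.pi:ℂ)*Complex.I*x))
    = 2*Complex.I*Complex.exp (-((Real.pi:ℂ)*Complex.I*x)) * Complex.sin ((Real.pi:ℂ)*x) := by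
  rw [Complex.sin]
  have h1 : Complex.exp (-((Real.pi:ℂ)*Complex.I*x)) * Complex.exp (-((Real.pi:ℂ)*x) * Complex.I)
      = Complex.exp (-(2*(Real.pi:ℂ)*Complex.I*x)) := by
    rw [← Complex.exp_add]; congr 1; ring
  have h2 : Complex.exp (-((Real.pi:ℂ)*Complex.I*x)) * Complex.exp (((Real.pi:ℂ)*x) * Complex.I)
      = 1 := by
    rw [← Complex.exp_add, show -((Real.pi:ℂ)*Complex.I*x) + ((Real.pi:ℂ)*x) * Complex.I = 0
      by ring, Complex.exp_zero]
  linear_combination h1 - h2 - (Complex.exp (-((Real.pi:ℂ)*Complex.I*x)) *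
    (Complex.exp (-((Real.pi:ℂ)*x) * Complex.I) - Complex.exp (((Real.pi:ℂ)*x) * Complex.I)))
      * Complex.I_mul_I

/-- trigonometric limit of `σ` as `Im τ → +∞`. -/
theorem sigma_trigonometric_limit (w t : ℂ)
    (hw : Complex.sin ((Real.pi : ℂ) * w) ≠ 0)
    (ht : Complex.sin ((Real.pi : ℂ) * t) ≠ 0) :
    Filter.Tendsto (fun τ : ℂ => sigma τ w t)
      (Filter.comap Complex.im Filter.atTop)
      (nhds ((Real.pi : ℂ) * Complex.sin ((Real.pi : ℂ) * (w - t)) /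
        (Complex.sin ((Real.pi : ℂ) * w) * Complex.sin ((Real.pi : ℂ) * t)))) := by
  have him : Filter.Tendsto Complex.im (Filter.comap Complex.im Filter.atTop) Filter.atTop :=
    Filter.tendsto_comap
  set G : ℂ → ℂ := fun τ => Complex.exp (-(2*(Real.pi:ℂ)*Complex.I*t)) *
    (jacobiTheta₂ (w - t + 1/2 + τ/2) τ *
      ((Real.pi:ℂ)*Complex.I * jacobiTheta₂ ((0:ℂ) + 1/2 + τ/2) τ
        + jacobiTheta₂' ((0:ℂ) + 1/2 + τ/2) τ) /
      (jacobiTheta₂ (w + 1/2 + τ/2) τ * jacobiTheta₂ (t + 1/2 + τ/2) τ)) with hG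
  have heq : ∀ᶠ τ in Filter.comap Complex.im Filter.atTop, sigma τ w t = G τ := by
    filter_upwards [him.eventually (Filter.eventually_gt_atTop 0)] with τ hτ
    rw [sigma, theta1_eq τ (w - t), theta1_eq τ w, theta1_eq τ t, theta1'_eq hτ, hG]
    have hr : Complex.exp ((Real.pi:ℂ)*Complex.I*τ/4 + (Real.pi:ℂ)*Complex.I*(w-t+1/2)) *
        Complex.exp ((Real.pi:ℂ)*Complex.I*τ/4 + (Real.pi:ℂ)*Complex.I*((0:ℂ)+1/2)) /
        (Complex.exp ((Real.pi:ℂ)*Complex.I*τ/4 + (Real.pi:ℂ)*Complex.I*(w+1/2)) *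
          Complex.exp ((Real.pi:ℂ)*Complex.I*τ/4 + (Real.pi:ℂ)*Complex.I*(t+1/2)))
        = Complex.exp (-(2*(Real.pi:ℂ)*Complex.I*t)) := by
      rw [← Complex.exp_add, ← Complex.exp_add, ← Complex.exp_sub]
      congr 1
      ring
    calc -(Complex.exp ((Real.pi:ℂ)*Complex.I*τ/4 + (Real.pi:ℂ)*Complex.I*(w-t+1/2)) *
            jacobiTheta₂ (w - t + 1/2 + τ/2) τ) *
          -(Complex.exp ((Real.pi:ℂ)*Complex.I*τ/4 + (Real.pi:ℂ)*Complex.I*((0:ℂ)+1/2)) *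
            ((Real.pi:ℂ)*Complex.I * jacobiTheta₂ ((0:ℂ) + 1/2 + τ/2) τ
              + jacobiTheta₂' ((0:ℂ) + 1/2 + τ/2) τ)) /
          (-(Complex.exp ((Real.pi:ℂ)*Complex.I*τ/4 + (Real.pi:ℂ)*Complex.I*(w+1/2)) *
            jacobiTheta₂ (w + 1/2 + τ/2) τ) *
          -(Complex.exp ((Real.pi:ℂ)*Complex.I*τ/4 + (Real.pi:ℂ)*Complex.I*(t+1/2)) *
            jacobiTheta₂ (t + 1/2 + τ/2) τ))
        = (Complex.exp ((Real.pi:ℂ)*Complex.I*τ/4 + (Real.pi:ℂ)*Complex.I*(w-t+1/2)) *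
            Complex.exp ((Real.pi:ℂ)*Complex.I*τ/4 + (Real.pi:ℂ)*Complex.I*((0:ℂ)+1/2))) *
          (jacobiTheta₂ (w - t + 1/2 + τ/2) τ *
            ((Real.pi:ℂ)*Complex.I * jacobiTheta₂ ((0:ℂ) + 1/2 + τ/2) τ
              + jacobiTheta₂' ((0:ℂ) + 1/2 + τ/2) τ)) /
          ((Complex.exp ((Real.pi:ℂ)*Complex.I*τ/4 + (Real.pi:ℂ)*Complex.I*(w+1/2)) *
            Complex.exp ((Real.pi:ℂ)*Complex.I*τ/4 + (Real.pi:ℂ)*Complex.I*(t+1/2))) *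
          (jacobiTheta₂ (w + 1/2 + τ/2) τ * jacobiTheta₂ (t + 1/2 + τ/2) τ)) := by
          ring
      _ = _ := by
          rw [mul_div_mul_comm, hr]
  apply Filter.Tendsto.congr' (Filter.EventuallyEq.symm heq)
  have hnum : Filter.Tendsto (fun τ : ℂ => jacobiTheta₂ (w - t + 1/2 + τ/2) τ *
      ((Real.pi:ℂ)*Complex.I * jacobiTheta₂ ((0:ℂ) + 1/2 + τ/2) τ
        + jacobiTheta₂' ((0:ℂ) + 1/2 + τ/2) τ))
      (Filter.comap Complex.im Filter.atTop)
      (nhds ((1 - Complex.exp (-(2*(Real.pi:ℂ)*Complex.I*(w - t)))) *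
        ((Real.pi:ℂ)*Complex.I * (1 - Complex.exp (-(2*(Real.pi:ℂ)*Complex.I*(0:ℂ))))
          + 2*(Real.pi:ℂ)*Complex.I))) :=
    (limJ (w - t)).mul ((tendsto_const_nhds.mul (limJ 0)).add limD)
  have hden : Filter.Tendsto (fun τ : ℂ =>
      jacobiTheta₂ (w + 1/2 + τ/2) τ * jacobiTheta₂ (t + 1/2 + τ/2) τ)
      (Filter.comap Complex.im Filter.atTop)
      (nhds ((1 - Complex.exp (-(2*(Real.pi:ℂ)*Complex.I*w))) *
        (1 - Complex.exp (-(2*(Real.pi:ℂ)*Complex.I*t))))) :=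
    (limJ w).mul (limJ t)
  have hne : (1 - Complex.exp (-(2*(Real.pi:ℂ)*Complex.I*w))) *
      (1 - Complex.exp (-(2*(Real.pi:ℂ)*Complex.I*t))) ≠ 0 := by
    rw [Lform w, Lform t]
    exact mul_ne_zero
      (mul_ne_zero (mul_ne_zero (mul_ne_zero two_ne_zero Complex.I_ne_zero)
        (Complex.exp_ne_zero _)) hw)
      (mul_ne_zero (mul_ne_zero (mul_ne_zero two_ne_zero Complex.I_ne_zero)
        (Complex.exp_ne_zero _)) ht)
  have hmain : Filter.Tendsto G (Filter.comap Complex.im Filter.atTop)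
      (nhds (Complex.exp (-(2*(Real.pi:ℂ)*Complex.I*t)) *
        ((1 - Complex.exp (-(2*(Real.pi:ℂ)*Complex.I*(w - t)))) *
          ((Real.pi:ℂ)*Complex.I * (1 - Complex.exp (-(2*(Real.pi:ℂ)*Complex.I*(0:ℂ))))
            + 2*(Real.pi:ℂ)*Complex.I) /
          ((1 - Complex.exp (-(2*(Real.pi:ℂ)*Complex.I*w))) *
            (1 - Complex.exp (-(2*(Real.pi:ℂ)*Complex.I*t))))))) :=
    tendsto_const_nhds.mul (hnum.div hden hne)
  have hval : Complex.exp (-(2*(Real.pi:ℂ)*Complex.I*t)) *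
        ((1 - Complex.exp (-(2*(Real.pi:ℂ)*Complex.I*(w - t)))) *
          ((Real.pi:ℂ)*Complex.I * (1 - Complex.exp (-(2*(Real.pi:ℂ)*Complex.I*(0:ℂ))))
            + 2*(Real.pi:ℂ)*Complex.I) /
          ((1 - Complex.exp (-(2*(Real.pi:ℂ)*Complex.I*w))) *
            (1 - Complex.exp (-(2*(Real.pi:ℂ)*Complex.I*t)))))
      = (Real.pi : ℂ) * Complex.sin ((Real.pi : ℂ) * (w - t)) /
        (Complex.sin ((Real.pi : ℂ) * w) * Complex.sin ((Real.pi : ℂ) * t)) := by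
    have h0 : Complex.exp (-(2*(Real.pi:ℂ)*Complex.I*(0:ℂ))) = 1 := by norm_num
    rw [h0, Lform (w - t), Lform w, Lform t]
    have hx : Complex.exp (-(2*(Real.pi:ℂ)*Complex.I*t)) *
        Complex.exp (-((Real.pi:ℂ)*Complex.I*(w-t)))
        = Complex.exp (-((Real.pi:ℂ)*Complex.I*w)) * Complex.exp (-((Real.pi:ℂ)*Complex.I*t)) := by
      rw [← Complex.exp_add, ← Complex.exp_add]; congr 1; ring
    have h1 : (Real.pi:ℂ)*Complex.I*(1-1) + 2*(Real.pi:ℂ)*Complex.I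
        = 2*(Real.pi:ℂ)*Complex.I := by ring
    rw [h1, mul_div_assoc']
    have hD : (2*Complex.I*Complex.exp (-((Real.pi:ℂ)*Complex.I*w)) *
          Complex.sin ((Real.pi:ℂ)*w)) *
        (2*Complex.I*Complex.exp (-((Real.pi:ℂ)*Complex.I*t)) *
          Complex.sin ((Real.pi:ℂ)*t)) ≠ 0 :=
      mul_ne_zero
        (mul_ne_zero (mul_ne_zero (mul_ne_zero two_ne_zero Complex.I_ne_zero)
          (Complex.exp_ne_zero _)) hw)
        (mul_ne_zero (mul_ne_zero (mul_ne_zero two_ne_zero Complex.I_ne_zero)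
          (Complex.exp_ne_zero _)) ht)
    rw [div_eq_div_iff hD (mul_ne_zero hw ht)]
    linear_combination (4*(Real.pi:ℂ)*Complex.I^2*Complex.sin ((Real.pi:ℂ)*(w-t)) *
      Complex.sin ((Real.pi:ℂ)*w)*Complex.sin ((Real.pi:ℂ)*t)) * hx
  rw [← hval]
  exact hmain
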